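/- Let F be a field, k ≥ 1 and n ≥ 1 natural numbers, and M a finite multiset of irreducible polynomials in F[λ], each of degree at most k. Then there exist multisets M_1, …, M_n of polynomials whose multiset-sum (disjoint union) is M such that, setting p_i equal to the product of the elements of M_i (so each p_i is nonzero): the degree vector (deg p_1, …, deg p_n) is k-homogeneous, and for each j with 1 ≤ j ≤ k, the vector whose i-th entry is the number of elements of M_i of degree j is 1-homogeneous. -/

import Mathlib

open Polynomial

section Statement9Aux

open Finset

private lemma s9_mem_c {n : ℕ} (hn : 0 < n) (m i q : ℕ) (hi : i < n) :
    q < (m + n - 1 - i) / n ↔ i + q * n < m := by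
  have h1 : q < (m + n - 1 - i) / n ↔ q + 1 ≤ (m + n - 1 - i) / n := Iff.rfl
  rw [h1, Nat.le_div_iff_mul_le hn]
  have h2 : (q + 1) * n = q * n + n := by ring
  omega

private lemma s9_filter_mod_eq_image {n : ℕ} (hn : 0 < n) (m i : ℕ) (hi : i < n) :
    (Finset.range m).filter (fun t => t % n = i)
      = (Finset.range ((m + n - 1 - i) / n)).image (fun q => i + q * n) := by
  ext t
  simp only [mem_filter, mem_range, mem_image]
  constructor
  · rintro ⟨htm, ht⟩
    have hdm : t % n + t / n * n = t := Nat.mod_add_div' t n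
    refine ⟨t / n, ?_, ?_⟩
    · rw [s9_mem_c hn m i _ hi]; omega
    · omega
  · rintro ⟨q, hq, rfl⟩
    rw [s9_mem_c hn m i q hi] at hq
    exact ⟨hq, by simp [Nat.add_mul_mod_self_right, Nat.mod_eq_of_lt hi]⟩

private lemma s9_card_filter_mod {n : ℕ} (hn : 0 < n) (m i : ℕ) (hi : i < n) :
    ((Finset.range m).filter (fun t => t % n = i)).card = (m + n - 1 - i) / n := by
  rw [s9_filter_mod_eq_image hn m i hi, Finset.card_image_of_injective _ ?_, card_range]
  intro a b hab
  simp only at hab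
  exact Nat.eq_of_mul_eq_mul_right hn (show a * n = b * n by omega)

private lemma s9_sum_filter_mod {n : ℕ} {M : Type*} [AddCommMonoid M] (hn : 0 < n) (m i : ℕ)
    (hi : i < n) (f : ℕ → M) :
    ∑ t ∈ (Finset.range m).filter (fun t => t % n = i), f t
      = ∑ q ∈ Finset.range ((m + n - 1 - i) / n), f (i + q * n) := by
  rw [s9_filter_mod_eq_image hn m i hi, Finset.sum_image]
  intro a _ b _ hab
  simp only at hab
  exact Nat.eq_of_mul_eq_mul_right hn (show a * n = b * n by omega)

private lemma s9_c_decomp {n : ℕ} (hn : 0 < n) (s e i : ℕ) (hi : i < n) (hse : s ≤ e) :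
    (e + n - 1 - i) / n
      = (s + n - 1 - i) / n + (e - s) / n
        + if n ≤ (s + n - 1 - i) % n + (e - s) % n then 1 else 0 := by
  have h1 : e + n - 1 - i = (s + n - 1 - i) + (e - s) := by omega
  rw [h1, Nat.add_div hn]

private lemma s9_lower_filter (P : ℕ → Prop) [DecidablePred P] (m : ℕ)
    (hP : ∀ t t', t' ≤ t → t < m → P t → P t') :
    (Finset.range m).filter P = Finset.range (((Finset.range m).filter P).card) := by
  induction m with
  | zero => simp
  | succ m ih =>
    rw [Finset.range_add_one, Finset.filter_insert]
    by_cases hPm : P m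
    · rw [if_pos hPm]
      have hall : (Finset.range m).filter P = Finset.range m := by
        apply Finset.filter_true_of_mem
        intro t ht
        exact hP m t (Nat.le_of_lt (Finset.mem_range.mp ht)) (Nat.lt_succ_self m) hPm
      rw [hall]
      rw [← Finset.range_add_one]
      congr 1
      rw [Finset.card_range]
    · rw [if_neg hPm]
      exact ih (fun t t' h1 h2 h3 => hP t t' h1 (by omega) h3)

private lemma s9_multiset_sum_filter_mod {n : ℕ} (hn : 0 < n) (s : Multiset ℕ) :
    ∑ i : Fin n, s.filter (fun t => t % n = (i : ℕ)) = s := by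
  induction s using Multiset.induction_on with
  | empty => simp
  | cons a s ih =>
    simp only [Multiset.filter_cons]
    rw [Finset.sum_add_distrib, ih]
    have : ∑ i : Fin n, (if a % n = (i : ℕ) then ({a} : Multiset ℕ) else 0) = {a} := by
      rw [Fintype.sum_eq_single (⟨a % n, Nat.mod_lt a hn⟩ : Fin n)]
      · simp
      · intro j hj
        rw [if_neg]
        intro h
        apply hj
        exact Fin.ext h.symm
    rw [this]
    rfl

private lemma s9_ico_count {n : ℕ} (hn : 0 < n) (s e i : ℕ) (hi : i < n) (hse : s ≤ e) :
    ∃ b ≤ 1, ((Finset.Ico s e).filter (fun t => t % n = i)).card = (e - s) / n + b := by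
  refine ⟨if n ≤ (s + n - 1 - i) % n + (e - s) % n then 1 else 0, by split <;> omega, ?_⟩
  have hsplit : (Finset.range e) = Finset.range s ∪ Finset.Ico s e := by
    rw [Finset.range_eq_Ico, Finset.range_eq_Ico, Finset.Ico_union_Ico_eq_Ico (Nat.zero_le s) hse,
      ← Finset.range_eq_Ico]
  have hdisj : Disjoint ((Finset.range s).filter (fun t => t % n = i))
      ((Finset.Ico s e).filter (fun t => t % n = i)) := by
    apply Finset.disjoint_filter_filter
    rw [Finset.range_eq_Ico]
    exact Finset.Ico_disjoint_Ico_consecutive 0 s e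
  have hcard : ((Finset.range e).filter (fun t => t % n = i)).card
      = ((Finset.range s).filter (fun t => t % n = i)).card
        + ((Finset.Ico s e).filter (fun t => t % n = i)).card := by
    rw [hsplit, Finset.filter_union, Finset.card_union_of_disjoint hdisj]
  rw [s9_card_filter_mod hn e i hi, s9_card_filter_mod hn s i hi] at hcard
  rw [s9_c_decomp hn s e i hi hse] at hcard
  omega

private lemma s9_deg_bound {n k m : ℕ} (hn : 0 < n) (hk : 1 ≤ k) (a : ℕ → ℕ)
    (amono : ∀ t t', t ≤ t' → t' < m → a t ≤ a t')
    (alb : ∀ t, t < m → 1 ≤ a t) (aub : ∀ t, t < m → a t ≤ k)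
    (i j : ℕ) (hij : i < j) (hj : j < n) :
    (∑ q ∈ range ((m + n - 1 - j) / n), a (j + q * n))
        ≤ (∑ q ∈ range ((m + n - 1 - i) / n), a (i + q * n)) + (k - 1)
    ∧ (∑ q ∈ range ((m + n - 1 - i) / n), a (i + q * n))
        ≤ (∑ q ∈ range ((m + n - 1 - j) / n), a (j + q * n)) + k := by
  have hi : i < n := by omega
  set ci := (m + n - 1 - i) / n with hci_def
  set cj := (m + n - 1 - j) / n with hcj_def
  have hci : ∀ q, q < ci ↔ i + q * n < m := fun q => s9_mem_c hn m i q hi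
  have hcj : ∀ q, q < cj ↔ j + q * n < m := fun q => s9_mem_c hn m j q hj
  have hcc : cj ≤ ci := Nat.div_le_div_right (by omega)
  have hcc2 : ci ≤ cj + 1 := by
    have h1 : m + n - 1 - i = (m + n - 1 - j) + (j - i) := by omega
    have h2 : (j - i) / n = 0 := Nat.div_eq_of_lt (by omega)
    rw [hci_def, h1, Nat.add_div hn, h2]
    split <;> omega
  constructor
  · rcases Nat.eq_zero_or_pos cj with h0 | hpos
    · rw [h0]; simp
    obtain ⟨d, hd⟩ : ∃ d, cj = d + 1 := ⟨cj - 1, by omega⟩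
    rw [hd, Finset.sum_range_succ]
    have step1 : ∑ q ∈ range d, a (j + q * n) ≤ ∑ q ∈ range d, a (i + (q + 1) * n) := by
      apply Finset.sum_le_sum
      intro q hq
      rw [Finset.mem_range] at hq
      apply amono
      · have : (q + 1) * n = q * n + n := by ring
        omega
      · rw [← hci]; omega
    have step2 : ∑ q ∈ range d, a (i + (q + 1) * n) + a (i + 0 * n)
        = ∑ q ∈ range (d + 1), a (i + q * n) :=
      (Finset.sum_range_succ' (fun q => a (i + q * n)) d).symm
    have step3 : ∑ q ∈ range (d + 1), a (i + q * n) ≤ ∑ q ∈ range ci, a (i + q * n) := by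
      apply Finset.sum_le_sum_of_subset
      exact Finset.range_subset_range.mpr (by omega)
    have hai : 1 ≤ a (i + 0 * n) := alb _ (by rw [← hci]; omega)
    have haj : a (j + d * n) ≤ k := aub _ (by rw [← hcj]; omega)
    omega
  · by_cases h : ci ≤ cj
    · have hc : ci = cj := le_antisymm h hcc
      rw [hc]
      have : ∑ q ∈ range cj, a (i + q * n) ≤ ∑ q ∈ range cj, a (j + q * n) := by
        apply Finset.sum_le_sum
        intro q hq
        rw [Finset.mem_range] at hq
        exact amono _ _ (by omega) (by rw [← hcj]; omega)
      omega
    · have hceq : ci = cj + 1 := by omega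
      rw [hceq, Finset.sum_range_succ]
      have h1 : ∑ q ∈ range cj, a (i + q * n) ≤ ∑ q ∈ range cj, a (j + q * n) := by
        apply Finset.sum_le_sum
        intro q hq
        rw [Finset.mem_range] at hq
        exact amono _ _ (by omega) (by rw [← hcj]; omega)
      have h2 : a (i + cj * n) ≤ k := aub _ (by rw [← hci]; omega)
      omega

end Statement9Aux

theorem statement_9 {F : Type*} [Field F] (k n : ℕ) (hk : 1 ≤ k) (hn : 1 ≤ n)
    (M : Multiset F[X]) (hM : ∀ p ∈ M, Irreducible p ∧ p.natDegree ≤ k) :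
    ∃ Ms : Fin n → Multiset F[X],
      -- the multiset-sum of the parts is M
      (∑ i, Ms i) = M ∧
      -- each product is nonzero
      (∀ i, (Ms i).prod ≠ 0) ∧
      -- the degree vector is k-homogeneous
      (∀ i j : Fin n,
        |(((Ms i).prod.natDegree : ℤ) - ((Ms j).prod.natDegree : ℤ))| ≤ (k : ℤ)) ∧
      -- for each degree 1 ≤ jd ≤ k the vector counting elements of degree jd
      -- is 1-homogeneous
      (∀ jd : ℕ, 1 ≤ jd → jd ≤ k → ∀ i j : Fin n,
        |((Multiset.countP (fun p => p.natDegree = jd) (Ms i) : ℤ)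
          - (Multiset.countP (fun p => p.natDegree = jd) (Ms j) : ℤ))| ≤ 1) := by
  classical
  have hn0 : 0 < n := hn
  -- get a sorted list representing M
  obtain ⟨L, hsort, hperm⟩ : ∃ L : List F[X],
      L.Pairwise (fun p q => p.natDegree ≤ q.natDegree) ∧ L.Perm M.toList := by
    haveI : Std.Total (fun p q : F[X] => p.natDegree ≤ q.natDegree) :=
      ⟨fun p q => Nat.le_total _ _⟩
    haveI : IsTrans F[X] (fun p q : F[X] => p.natDegree ≤ q.natDegree) :=
      ⟨fun _ _ _ => Nat.le_trans⟩
    exact ⟨List.insertionSort _ M.toList, List.pairwise_insertionSort _ _,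
      List.perm_insertionSort _ _⟩
  have hLM : (↑L : Multiset F[X]) = M := by
    rw [← M.coe_toList]
    exact Multiset.coe_eq_coe.mpr hperm
  set m := L.length with hm
  set f : ℕ → F[X] := fun t => L.getD t 0 with hf
  set a : ℕ → ℕ := fun t => (f t).natDegree with ha
  have hfget : ∀ t (ht : t < m), f t = L[t] := fun t ht => List.getD_eq_getElem L 0 ht
  have hmem : ∀ t, t < m → f t ∈ M := by
    intro t ht
    rw [← hLM, hfget t ht]
    exact Multiset.mem_coe.mpr (List.getElem_mem ht)
  have hirr : ∀ t, t < m → Irreducible (f t) := fun t ht => (hM _ (hmem t ht)).1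
  have halb : ∀ t, t < m → 1 ≤ a t := fun t ht => (hirr t ht).natDegree_pos
  have haub : ∀ t, t < m → a t ≤ k := fun t ht => (hM _ (hmem t ht)).2
  have hamono : ∀ t t', t ≤ t' → t' < m → a t ≤ a t' := by
    intro t t' htt ht'
    rcases Nat.eq_or_lt_of_le htt with rfl | hlt
    · exact le_rfl
    · have := List.pairwise_iff_getElem.mp hsort t t' (by omega) ht' hlt
      rw [ha]
      simp only
      rw [hfget t (by omega), hfget t' ht']
      exact this
  set FS : Fin n → Finset ℕ := fun i => (Finset.range m).filter (fun t => t % n = (i : ℕ))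
    with hFS
  refine ⟨fun i => Multiset.map f (FS i).val, ?_, ?_, ?_, ?_⟩
  · -- sum is M
    have h1 : ∑ i : Fin n, (FS i).val = Multiset.range m := by
      simp only [hFS, Finset.filter_val, Finset.range_val]
      exact s9_multiset_sum_filter_mod hn0 (Multiset.range m)
    have h2 : ∑ i : Fin n, Multiset.map f (FS i).val
        = Multiset.map f (∑ i : Fin n, (FS i).val) := by
      have h2' : ∀ v : Multiset ℕ, Multiset.map f v = Multiset.mapAddMonoidHom f v :=
        fun v => rfl
      simp only [h2']
      exact (map_sum (Multiset.mapAddMonoidHom f) _ _).symm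
    show ∑ i : Fin n, Multiset.map f (FS i).val = M
    rw [h2, h1]
    have h3 : Multiset.range m = ↑(List.range m) := rfl
    rw [h3, Multiset.map_coe, ← hLM]
    congr 1
    apply List.ext_getElem
    · simp [hm]
    · intro t h1t h2t
      simp only [List.getElem_map, List.getElem_range]
      exact hfget t (by simpa using h1t)
  · -- products nonzero
    intro i
    apply Multiset.prod_ne_zero
    intro h0
    obtain ⟨t, htmem, hft⟩ := Multiset.mem_map.mp h0
    have ht : t < m := Finset.mem_range.mp (Finset.mem_filter.mp htmem).1
    exact (hirr t ht).ne_zero hft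
  · -- degree vector k-homogeneous
    have h0i : ∀ i : Fin n, (0 : F[X]) ∉ Multiset.map f (FS i).val := by
      intro i h0
      obtain ⟨t, htmem, hft⟩ := Multiset.mem_map.mp h0
      have ht : t < m := Finset.mem_range.mp (Finset.mem_filter.mp htmem).1
      exact (hirr t ht).ne_zero hft
    have hdeg : ∀ i : Fin n, (Multiset.map f (FS i).val).prod.natDegree
        = ∑ q ∈ Finset.range ((m + n - 1 - (i : ℕ)) / n), a ((i : ℕ) + q * n) := by
      intro i
      rw [Polynomial.natDegree_multiset_prod _ (h0i i), Multiset.map_map]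
      have h3 : (Multiset.map (Polynomial.natDegree ∘ f) (FS i).val).sum
          = ∑ t ∈ FS i, a t := rfl
      rw [h3]
      exact s9_sum_filter_mod hn0 m (i : ℕ) i.isLt a
    intro i j
    rcases lt_trichotomy (i : ℕ) (j : ℕ) with hij | hij | hij
    · obtain ⟨hA, hB⟩ := s9_deg_bound hn0 hk a hamono halb haub (i : ℕ) (j : ℕ) hij j.isLt
      rw [hdeg i, hdeg j, abs_le]
      constructor <;> omega
    · have : i = j := Fin.ext hij
      subst this
      simp
    · obtain ⟨hA, hB⟩ := s9_deg_bound hn0 hk a hamono halb haub (j : ℕ) (i : ℕ) hij i.isLt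
      rw [hdeg i, hdeg j, abs_le]
      constructor <;> omega
  · -- degree counts 1-homogeneous
    intro jd hjd1 hjdk i j
    set e := ((Finset.range m).filter (fun t => a t ≤ jd)).card with he
    set s := ((Finset.range m).filter (fun t => a t < jd)).card with hs
    have hfe : (Finset.range m).filter (fun t => a t ≤ jd) = Finset.range e :=
      s9_lower_filter _ m (fun t t' h1 h2 h3 => le_trans (hamono t' t h1 h2) h3)
    have hfs : (Finset.range m).filter (fun t => a t < jd) = Finset.range s :=
      s9_lower_filter _ m (fun t t' h1 h2 h3 => lt_of_le_of_lt (hamono t' t h1 h2) h3)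
    have hse : s ≤ e := by
      apply Finset.card_le_card
      intro t ht
      simp only [Finset.mem_filter, Finset.mem_range] at ht ⊢
      omega
    have hIco : (Finset.range m).filter (fun t => a t = jd) = Finset.Ico s e := by
      have h2 : (Finset.range m).filter (fun t => a t = jd)
          = ((Finset.range m).filter (fun t => a t ≤ jd))
            \ ((Finset.range m).filter (fun t => a t < jd)) := by
        ext t
        simp only [Finset.mem_filter, Finset.mem_sdiff, Finset.mem_range]
        omega
      rw [h2, hfe, hfs]
      ext t
      simp only [Finset.mem_sdiff, Finset.mem_range, Finset.mem_Ico]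
      omega
    have hcount : ∀ i : Fin n, ∃ b ≤ 1,
        Multiset.countP (fun p => p.natDegree = jd) (Multiset.map f (FS i).val)
          = (e - s) / n + b := by
      intro i
      rw [Multiset.countP_map]
      have h3 : Multiset.card (Multiset.filter (fun t => (f t).natDegree = jd) (FS i).val)
          = ((FS i).filter (fun t => a t = jd)).card := rfl
      rw [h3]
      have h4 : (FS i).filter (fun t => a t = jd)
          = (Finset.Ico s e).filter (fun t => t % n = (i : ℕ)) := by
        rw [hFS]
        simp only
        rw [Finset.filter_comm, hIco]
      rw [h4]
      exact s9_ico_count hn0 s e (i : ℕ) i.isLt hse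
    obtain ⟨bi, hbi, hcounti⟩ := hcount i
    obtain ⟨bj, hbj, hcountj⟩ := hcount j
    rw [hcounti, hcountj, abs_le]
    constructor <;> push_cast <;> omega
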